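/- (Unbiasedness of the Poisson estimator.) Let X be a Poisson(1) random variable and let Y_1, Y_2, … be i.i.d. integrable real random variables with mean μ, independent of X. Then E[ ∏_{h=1}^{X} Y_h ] = e^{μ − 1}, where the empty product (X = 0) equals 1. Consequently, if each Y_h = (D_h − a)/λ with E[D_h] = d, then for the factor ξ = e^{(a+λ)/λ} ∏_{h=1}^{X} (D_h − a)/λ one has E[ξ] = e^{d/λ}. -/

import Mathlib

open MeasureTheory ProbabilityTheory Finset
open scoped NNReal

section Aux

variable {Ω : Type*} [MeasurableSpace Ω] (P : Measure Ω) [IsProbabilityMeasure P]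

/-- Integrability and integral of a finite product of independent integrable functions. -/
lemma aux_prod_integral (Z : ℕ → Ω → ℝ) (hmeas : ∀ h, Measurable (Z h))
    (hindep : iIndepFun Z P)
    (hint : ∀ h, Integrable (Z h) P) (n : ℕ) :
    Integrable (fun ω => ∏ h ∈ Finset.range n, Z h ω) P ∧
    ∫ ω, ∏ h ∈ Finset.range n, Z h ω ∂P = ∏ h ∈ Finset.range n, ∫ ω, Z h ω ∂P := by
  induction n with
  | zero => simp
  | succ n ih =>
    have hfun : (fun ω => ∏ h ∈ Finset.range n, Z h ω) = ∏ h ∈ Finset.range n, Z h := by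
      ext ω; simp
    have hInd : IndepFun (fun ω => ∏ h ∈ Finset.range n, Z h ω) (Z n) P := by
      rw [hfun]; exact hindep.indepFun_prod_range_succ hmeas n
    have hint2 : Integrable (fun ω => (∏ h ∈ Finset.range n, Z h ω) * Z n ω) P :=
      hInd.integrable_mul ih.1 (hint n)
    constructor
    · simpa [Finset.prod_range_succ] using hint2
    · calc ∫ ω, ∏ h ∈ Finset.range (n + 1), Z h ω ∂P
          = ∫ ω, (∏ h ∈ Finset.range n, Z h ω) * Z n ω ∂P := by
            simp [Finset.prod_range_succ]
        _ = (∫ ω, ∏ h ∈ Finset.range n, Z h ω ∂P) * ∫ ω, Z n ω ∂P :=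
            hInd.integral_fun_mul_eq_mul_integral ih.1.aestronglyMeasurable
              (hint n).aestronglyMeasurable
        _ = ∏ h ∈ Finset.range (n + 1), ∫ ω, Z h ω ∂P := by
            rw [ih.2, Finset.prod_range_succ]

/-- Key lemma: expectation of the random product. -/
lemma aux_key (X : Ω → ℕ) (hX_meas : Measurable X)
    (hX_law : Measure.map X P = poissonMeasure 1)
    (Y : ℕ → Ω → ℝ) (hY_meas : ∀ h, Measurable (Y h))
    (hY_indep : iIndepFun Y P)
    (hY_ident : ∀ h h', IdentDistrib (Y h) (Y h') P P)
    (hY_int : ∀ h, Integrable (Y h) P)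
    (μY : ℝ) (hY_mean : ∀ h, ∫ ω, Y h ω ∂P = μY)
    (hXY_indep : IndepFun X (fun ω h => Y h ω) P) :
    ∫ ω, ∏ h ∈ Finset.range (X ω), Y h ω ∂P = Real.exp (μY - 1) := by
  classical
  -- probability that X = n
  have hP : ∀ n : ℕ, P (X ⁻¹' {n}) = ENNReal.ofReal (poissonPMFReal 1 n) := by
    intro n
    rw [← Measure.map_apply hX_meas (measurableSet_singleton n), hX_law,
      poissonMeasure_singleton]
    rfl
  have hPtoReal : ∀ n : ℕ, (P (X ⁻¹' {n})).toReal = poissonPMFReal 1 n := by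
    intro n
    rw [hP n, ENNReal.toReal_ofReal poissonPMFReal_nonneg]
  -- the indicator factor
  set χ : ℕ → Ω → ℝ := fun n ω => if X ω = n then (1 : ℝ) else 0 with hχ
  have hχ_ind : ∀ n, χ n = Set.indicator (X ⁻¹' {n}) (fun _ => (1 : ℝ)) := by
    intro n; ext ω; simp [hχ, Set.indicator_apply]
  have hχ_meas : ∀ n, Measurable (χ n) := by
    intro n; rw [hχ_ind n]
    exact (measurable_const.indicator (hX_meas (measurableSet_singleton n)))
  have hχ_int : ∀ n, Integrable (χ n) P := by
    intro n; rw [hχ_ind n]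
    exact (integrable_const (1 : ℝ)).indicator (hX_meas (measurableSet_singleton n))
  have hχ_integral : ∀ n, ∫ ω, χ n ω ∂P = poissonPMFReal 1 n := by
    intro n
    rw [hχ_ind n]
    have : ∫ ω, Set.indicator (X ⁻¹' {n}) (fun _ => (1 : ℝ)) ω ∂P
        = (P (X ⁻¹' {n})).toReal := by
      exact (integral_indicator_one (hX_meas (measurableSet_singleton n))).trans (measureReal_def _ _)
    rw [this, hPtoReal]
  -- independence of χ n and products over range n (for any transform of Y)
  have hIndep_gen : ∀ (u : ℝ → ℝ), Measurable u → ∀ n : ℕ,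
      IndepFun (χ n) (fun ω => ∏ h ∈ Finset.range n, u (Y h ω)) P := by
    intro u hu n
    have hφ : Measurable (fun m : ℕ => if m = n then (1 : ℝ) else 0) := measurable_from_top
    have hψ : Measurable (fun v : ℕ → ℝ => ∏ h ∈ Finset.range n, u (v h)) :=
      Finset.measurable_prod _ (fun h _ => hu.comp (measurable_pi_apply h))
    exact hXY_indep.comp hφ hψ
  -- integrals of products of Y and |Y|
  have hprodY := aux_prod_integral P Y hY_meas hY_indep hY_int
  have habs_meas : ∀ h, Measurable (fun ω => |Y h ω|) := fun h => (hY_meas h).abs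
  have habs_indep : iIndepFun (fun h ω => |Y h ω|) P :=
    hY_indep.comp (fun _ x => |x|) (fun _ => measurable_abs)
  have habs_int : ∀ h, Integrable (fun ω => |Y h ω|) P := fun h => (hY_int h).abs
  have hprodA := aux_prod_integral P (fun h ω => |Y h ω|) habs_meas habs_indep habs_int
  set c : ℝ := ∫ ω, |Y 0 ω| ∂P with hc
  have habs_mean : ∀ h, ∫ ω, |Y h ω| ∂P = c := by
    intro h
    exact ((hY_ident h 0).comp measurable_abs).integral_eq
  have hc_nonneg : 0 ≤ c := by
    rw [hc]; exact integral_nonneg fun ω => abs_nonneg _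
  -- the summands
  set g : ℕ → Ω → ℝ := fun n ω => χ n ω * ∏ h ∈ Finset.range n, Y h ω with hg
  have hg_int : ∀ n, Integrable (g n) P := by
    intro n
    have := (hIndep_gen id measurable_id n).integrable_mul (hχ_int n) (hprodY n).1
    exact this
  have hg_integral : ∀ n, ∫ ω, g n ω ∂P = poissonPMFReal 1 n * μY ^ n := by
    intro n
    have h1 := (hIndep_gen id measurable_id n).integral_fun_mul_eq_mul_integral
      (hχ_int n).aestronglyMeasurable (hprodY n).1.aestronglyMeasurable
    have h2 : ∫ ω, ∏ h ∈ Finset.range n, Y h ω ∂P = μY ^ n := by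
      rw [(hprodY n).2]
      simp [hY_mean]
    simpa [hg, hχ_integral n, h2] using h1
  -- norm integrals
  have hg_norm : ∀ n, ∫ ω, ‖g n ω‖ ∂P = poissonPMFReal 1 n * c ^ n := by
    intro n
    have habs : ∀ ω, ‖g n ω‖ = χ n ω * ∏ h ∈ Finset.range n, |Y h ω| := by
      intro ω
      rw [Real.norm_eq_abs, hg]
      simp only [abs_mul, Finset.abs_prod]
      congr 1
      simp [hχ, apply_ite abs]
    have h1 := (hIndep_gen abs measurable_abs n).integral_fun_mul_eq_mul_integral
      (hχ_int n).aestronglyMeasurable ((hprodA n).1).aestronglyMeasurable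
    have h2 : ∫ ω, ∏ h ∈ Finset.range n, |Y h ω| ∂P = c ^ n := by
      rw [(hprodA n).2]; simp [habs_mean]
    calc ∫ ω, ‖g n ω‖ ∂P = ∫ ω, χ n ω * ∏ h ∈ Finset.range n, |Y h ω| ∂P := by
          simp_rw [habs]
      _ = poissonPMFReal 1 n * c ^ n := by simpa [hχ_integral n, h2] using h1
  -- summability of the norm integrals
  have hsum : Summable (fun n => ∫ ω, ‖g n ω‖ ∂P) := by
    have : (fun n => ∫ ω, ‖g n ω‖ ∂P) = fun n => Real.exp (-1) * (c ^ n / n.factorial) := by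
      ext n
      rw [hg_norm n]
      simp [poissonPMFReal]
      ring
    rw [this]
    exact (Real.summable_pow_div_factorial c).mul_left _
  -- pointwise identity
  have hpt : ∀ ω, ∑' n, g n ω = ∏ h ∈ Finset.range (X ω), Y h ω := by
    intro ω
    have h0 : ∀ n, n ≠ X ω → g n ω = 0 := by
      intro n hn
      simp [hg, hχ, Ne.symm hn]
    rw [tsum_eq_single (X ω) h0]
    simp [hg, hχ]
  -- put things together
  have hswap := integral_tsum_of_summable_integral_norm hg_int hsum
  have hmain : ∑' n, ∫ ω, g n ω ∂P = ∫ ω, ∏ h ∈ Finset.range (X ω), Y h ω ∂P := by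
    rw [hswap]
    congr 1
    ext ω
    exact hpt ω
  rw [← hmain]
  have : ∀ n : ℕ, ∫ ω, g n ω ∂P = Real.exp (-1) * (μY ^ n / n.factorial) := by
    intro n
    rw [hg_integral n]
    simp [poissonPMFReal]
    ring
  simp_rw [this]
  rw [tsum_mul_left, (NormedSpace.expSeries_div_hasSum_exp μY).tsum_eq,
    ← Real.exp_eq_exp_ℝ, ← Real.exp_add]
  ring_nf

end Aux

/-- **Unbiasedness of the Poisson estimator.**
Let `X` be a Poisson(1) random variable and `Y 0, Y 1, …` i.i.d. integrable real random
variables with mean `μY`, independent of `X`.  Then `E[∏_{h<X} Y h] = exp (μY − 1)`, the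
empty product (`X = 0`) being `1`.  Consequently, if `D 0, D 1, …` are i.i.d. integrable
with mean `d`, independent of `X`, and each factor is `(D h − a)/λ`, then
`ξ = exp((a+λ)/λ) ∏_{h<X} (D h − a)/λ` satisfies `E[ξ] = exp (d/λ)`. -/
theorem poisson_estimator_unbiased
    {Ω : Type*} [MeasurableSpace Ω] (P : Measure Ω) [IsProbabilityMeasure P]
    (X : Ω → ℕ) (hX_meas : Measurable X)
    (hX_law : Measure.map X P = poissonMeasure 1)
    (Y : ℕ → Ω → ℝ) (hY_meas : ∀ h, Measurable (Y h))
    (hY_indep : iIndepFun Y P)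
    (hY_ident : ∀ h h', IdentDistrib (Y h) (Y h') P P)
    (hY_int : ∀ h, Integrable (Y h) P)
    (μY : ℝ) (hY_mean : ∀ h, ∫ ω, Y h ω ∂P = μY)
    (hXY_indep : IndepFun X (fun ω h => Y h ω) P)
    (D : ℕ → Ω → ℝ) (hD_meas : ∀ h, Measurable (D h))
    (hD_indep : iIndepFun D P)
    (hD_ident : ∀ h h', IdentDistrib (D h) (D h') P P)
    (hD_int : ∀ h, Integrable (D h) P)
    (d : ℝ) (hD_mean : ∀ h, ∫ ω, D h ω ∂P = d)
    (hXD_indep : IndepFun X (fun ω h => D h ω) P)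
    (a : ℝ) (lam : ℕ) (hlam : 0 < lam) :
    (∫ ω, ∏ h ∈ Finset.range (X ω), Y h ω ∂P = Real.exp (μY - 1)) ∧
    (∫ ω, Real.exp ((a + lam) / lam) * ∏ h ∈ Finset.range (X ω), ((D h ω - a) / lam) ∂P
      = Real.exp (d / lam)) := by
  have hlam' : (lam : ℝ) ≠ 0 := Nat.cast_ne_zero.mpr hlam.ne'
  constructor
  · exact aux_key P X hX_meas hX_law Y hY_meas hY_indep hY_ident hY_int μY hY_mean hXY_indep
  · set Y' : ℕ → Ω → ℝ := fun h ω => (D h ω - a) / lam with hY'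
    have hu : Measurable (fun x : ℝ => (x - a) / lam) :=
      (measurable_id.sub measurable_const).div_const _
    have hY'_meas : ∀ h, Measurable (Y' h) := fun h => hu.comp (hD_meas h)
    have hY'_indep : iIndepFun Y' P :=
      hD_indep.comp (fun _ x => (x - a) / lam) (fun _ => hu)
    have hY'_ident : ∀ h h', IdentDistrib (Y' h) (Y' h') P P :=
      fun h h' => (hD_ident h h').comp hu
    have hY'_int : ∀ h, Integrable (Y' h) P :=
      fun h => ((hD_int h).sub (integrable_const a)).div_const _
    have hY'_mean : ∀ h, ∫ ω, Y' h ω ∂P = (d - a) / lam := by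
      intro h
      simp only [hY']
      rw [integral_div, integral_sub (hD_int h) (integrable_const a), hD_mean h,
        integral_const]
      simp
    have hXY'_indep : IndepFun X (fun ω h => Y' h ω) P := by
      have hψ : Measurable (fun v : ℕ → ℝ => fun h => (v h - a) / lam) :=
        measurable_pi_lambda _ fun h =>
          ((measurable_pi_apply h).sub measurable_const).div_const _
      exact hXD_indep.comp measurable_id hψ
    have hkey := aux_key P X hX_meas hX_law Y' hY'_meas hY'_indep hY'_ident hY'_int
      ((d - a) / lam) hY'_mean hXY'_indep
    rw [integral_const_mul, hkey, ← Real.exp_add]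
    congr 1
    field_simp
    ring
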